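/- Under warm-starting, the learned feature set never grows after the first experiment: for every J ≥ 2, L_warm^(J) = L_warm^(1) = G, where G is the learned set at the end of the first experiment. -/

import Mathlib

open Finset

/-- Number of data points in `N` whose feature set contains the feature `v`. -/
def featCount {F X : Type} [DecidableEq F] (feats : X → Finset F)
    (N : Finset X) (v : F) : ℕ :=
  (N.filter fun x => v ∈ feats x).card

/-- `g(v; T, N)`: the frequency of feature `v` among the data points of `N`,
normalized by the size of the full training set `T`. -/
noncomputable def gval {F X : Type} [DecidableEq F] (feats : X → Finset F)
    (T N : Finset X) (v : F) : ℝ :=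
  (featCount feats N v : ℝ) / (T.card : ℝ)

/-- The set of data points of `T` with nonzero gradient: not memorized (not in
`M`) and not well-classified by the learned set `L` (fewer than `τ` of their
features are learned). -/
def active {F X : Type} [DecidableEq F] [DecidableEq X] (feats : X → Finset F) (τ : ℕ)
    (L : Finset F) (M T : Finset X) : Finset X :=
  (T \ M).filter fun x => ((feats x) ∩ L).card < τ

/-- The learned set after the first `i` steps of a run `us` starting from `L0`. -/
def learnedAfter {F : Type} [DecidableEq F] (L0 : Finset F) (us : List F)
    (i : ℕ) : Finset F :=
  L0 ∪ (us.take i).toFinset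

/-- `us` is a valid greedy training run on the dataset `T` with initially
memorized set `M`, starting from the learned set `L0`; `S` is the set of all
features, `τ` the well-classification threshold and `γ` the noise strength.
At every step the model picks a not-yet-learned feature of maximal frequency
`g` among the active (nonzero-gradient) data points; it is learned if its
frequency is at least `γ/|T|`, and at the end of the run every remaining
unlearned feature has frequency below `γ/|T|` (the remaining active points are
then memorized). -/
structure IsRun {F X : Type} [DecidableEq F] [DecidableEq X] (S : Finset F)
    (feats : X → Finset F) (τ : ℕ) (γ : ℝ) (T M : Finset X)
    (L0 : Finset F) (us : List F) : Prop where
  mem : ∀ i (h : i < us.length), us.get ⟨i, h⟩ ∈ S \ learnedAfter L0 us i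
  maximal : ∀ i (h : i < us.length), ∀ u ∈ S \ learnedAfter L0 us i,
    gval feats T (active feats τ (learnedAfter L0 us i) M T) u ≤
      gval feats T (active feats τ (learnedAfter L0 us i) M T) (us.get ⟨i, h⟩)
  threshold : ∀ i (h : i < us.length),
    γ / (T.card : ℝ) ≤
      gval feats T (active feats τ (learnedAfter L0 us i) M T) (us.get ⟨i, h⟩)
  stopped : ∀ u ∈ S \ learnedAfter L0 us us.length,
    gval feats T (active feats τ (learnedAfter L0 us us.length) M T) u <
      γ / (T.card : ℝ)

/-- The memorized set after a run: the previously memorized points together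
with all points that are still active (not well-classified) at the end of the
run. -/
def finalM {F X : Type} [DecidableEq F] [DecidableEq X] (feats : X → Finset F) (τ : ℕ)
    (T M : Finset X) (L0 : Finset F) (us : List F) : Finset X :=
  M ∪ active feats τ (L0 ∪ us.toFinset) M T

/-- The cumulative dataset `T_{1:j}`, the union of the first `j` chunks. -/
def cumT {X : Type} [DecidableEq X] (chunk : ℕ → Finset X) (j : ℕ) : Finset X :=
  (Finset.Icc 1 j).biUnion chunk

/-- `h(v; L)`: the fraction of data points (of one chunk) containing `v` that
are not well-classified by the learned set `L`. -/
noncomputable def hval {F : Type} [DecidableEq F] (C : ℕ) (Sc : Fin C → Finset F)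
    (nA : Fin C → Finset F → ℕ) (τ n : ℕ) (v : F) (L : Finset F) : ℝ :=
  (1 / (n : ℝ)) * ∑ c : Fin C, ∑ A ∈ (Sc c).powerset,
    (nA c A : ℝ) * (if v ∈ A ∧ (A ∩ L).card < τ then 1 else 0)

/-- The test accuracy of a learned feature set `L`. -/
noncomputable def ACC {F : Type} [DecidableEq F] (C : ℕ) (Sc : Fin C → Finset F)
    (nA : Fin C → Finset F → ℕ) (τ n : ℕ) (L : Finset F) : ℝ :=
  1 - ((C : ℝ) - 1) / (C : ℝ) * ((1 / (n : ℝ)) *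
    ∑ c : Fin C, ∑ A ∈ (Sc c).powerset,
      (nA c A : ℝ) * (if (A ∩ L).card < τ then 1 else 0))


lemma count_filter_eq {F X : Type} [DecidableEq F] [DecidableEq X]
    {C : ℕ} (Sc : Fin C → Finset F) (label : X → Fin C) (feats : X → Finset F)
    (nA : Fin C → Finset F → ℕ) (T : Finset X)
    (hfeats : ∀ x, feats x ⊆ Sc (label x))
    (hcount : ∀ c : Fin C, ∀ A ∈ (Sc c).powerset,
      (T.filter fun x => label x = c ∧ feats x = A).card = nA c A)
    (P : Finset F → Prop) [DecidablePred P] :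
    (T.filter fun x => P (feats x)).card
      = ∑ c : Fin C, ∑ A ∈ (Sc c).powerset.filter P, nA c A := by
  have hsplit : (T.filter fun x => P (feats x))
      = Finset.univ.biUnion fun c : Fin C =>
          ((Sc c).powerset.filter P).biUnion fun A =>
            T.filter fun x => label x = c ∧ feats x = A := by
    ext x
    simp only [mem_filter, mem_biUnion, mem_univ, true_and, mem_powerset]
    constructor
    · rintro ⟨hxT, hP⟩
      exact ⟨label x, feats x, ⟨hfeats x, hP⟩, hxT, rfl, rfl⟩
    · rintro ⟨c, A, ⟨hA, hP⟩, hxT, hlab, hfe⟩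
      exact ⟨hxT, hfe ▸ hP⟩
  rw [hsplit, card_biUnion]
  · refine Finset.sum_congr rfl fun c _ => ?_
    rw [card_biUnion]
    · exact Finset.sum_congr rfl fun A hA =>
        hcount c A (Finset.mem_of_mem_filter A hA)
    · intro A hA A' hA' hne
      rw [Function.onFun, Finset.disjoint_left]
      intro x hx hx'
      exact hne ((mem_filter.mp hx).2.2 ▸ (mem_filter.mp hx').2.2)
  · intro c _ c' _ hne
    rw [Function.onFun, Finset.disjoint_left]
    intro x hx hx'
    simp only [mem_biUnion, mem_filter] at hx hx'
    obtain ⟨A, _, _, h1, _⟩ := hx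
    obtain ⟨A', _, _, h1', _⟩ := hx'
    exact hne (h1 ▸ h1')

/-- under warm-starting the learned feature set never grows
after the first experiment: for every `J ≥ 2`, `L_warm^(J) = L_warm^(1)`. -/
theorem warm_learned_set_constant
    {F X : Type} [DecidableEq F] [DecidableEq X]
    (C K τ : ℕ) (γ : ℝ) (n : ℕ)
    (Sc : Fin C → Finset F) (label : X → Fin C) (feats : X → Finset F)
    (nA : Fin C → Finset F → ℕ) (chunk : ℕ → Finset X)
    (hγ : 0 < γ) (hτK : τ < K)
    (hK : ∀ c, (Sc c).card = K)
    (hdisjS : ∀ c c', c ≠ c' → Disjoint (Sc c) (Sc c'))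
    (hfeats : ∀ x, feats x ⊆ Sc (label x))
    (hnA : ∀ c, ∀ A ∈ (Sc c).powerset, 1 ≤ nA c A)
    (hn : n = ∑ c : Fin C, ∑ A ∈ (Sc c).powerset, nA c A)
    (hchunkdisj : ∀ j j', j ≠ j' → Disjoint (chunk j) (chunk j'))
    (hchunkcard : ∀ j, 1 ≤ j → (chunk j).card = n)
    (hcount : ∀ j, 1 ≤ j → ∀ c : Fin C, ∀ A ∈ (Sc c).powerset,
      ((chunk j).filter fun x => label x = c ∧ feats x = A).card = nA c A)
    (hC : 0 < C) (hτpos : 0 < τ)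
    (hinj : ∀ L : Finset F, L ⊆ Finset.univ.biUnion Sc →
      ∀ c : Fin C, ∀ v₁ ∈ Sc c, ∀ v₂ ∈ Sc c,
        hval C Sc nA τ n v₁ L = hval C Sc nA τ n v₂ L → v₁ = v₂)
    (hii : ∀ c : Fin C, ∃ v : Fin τ → F, Function.Injective v ∧ (∀ i, v i ∈ Sc c) ∧
      ∀ j, 1 ≤ j →
        ((∀ i : Fin τ, (i : ℕ) + 1 < τ →
            γ / (n : ℝ) ≤ gval feats (chunk j) (chunk j) (v i)) ∧
          gval feats (chunk j) (chunk j)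
            (v ⟨τ - 1, Nat.sub_lt hτpos Nat.one_pos⟩) < γ / (n : ℝ)))
    (Lw : ℕ → Finset F) (Mw : ℕ → Finset X) (usw : ℕ → List F)
    (hLw0 : Lw 0 = ∅) (hMw0 : Mw 0 = ∅)
    (hwarm : ∀ j : ℕ,
      IsRun (Finset.univ.biUnion Sc) feats τ γ (cumT chunk (j + 1)) (Mw j) (Lw j)
        (usw (j + 1)) ∧
      Lw (j + 1) = Lw j ∪ (usw (j + 1)).toFinset ∧
      Mw (j + 1) = finalM feats τ (cumT chunk (j + 1)) (Mw j) (Lw j) (usw (j + 1)))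
 :
    ∀ J : ℕ, 2 ≤ J → Lw J = Lw 1 := by
  have hn1 : 1 ≤ n := by
    obtain ⟨c⟩ : Nonempty (Fin C) := ⟨⟨0, hC⟩⟩
    have h1 : nA c ∅ ≤ ∑ A ∈ (Sc c).powerset, nA c A :=
      Finset.single_le_sum (fun _ _ => Nat.zero_le _) (Finset.empty_mem_powerset _)
    have h2 : (∑ A ∈ (Sc c).powerset, nA c A)
        ≤ ∑ c : Fin C, ∑ A ∈ (Sc c).powerset, nA c A :=
      Finset.single_le_sum (f := fun c' : Fin C => ∑ A ∈ (Sc c').powerset, nA c' A)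
        (fun _ _ => Nat.zero_le _) (Finset.mem_univ c)
    have h3 := hnA c ∅ (Finset.empty_mem_powerset _)
    omega
  have hchsub : ∀ l j, 1 ≤ l → l ≤ j → chunk l ⊆ cumT chunk j := by
    intro l j h1 h2 x hx
    exact Finset.mem_biUnion.mpr ⟨l, Finset.mem_Icc.mpr ⟨h1, h2⟩, hx⟩
  have hT1 : cumT chunk 1 = chunk 1 := by
    simp [cumT]
  set S := Finset.univ.biUnion Sc with hS
  have run1 := (hwarm 0).1
  have hLw1 : Lw 1 = Lw 0 ∪ (usw 1).toFinset := (hwarm 0).2.1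
  have hcnt : ∀ u : F, ∀ j, 1 ≤ j →
      ((chunk j).filter fun x => u ∈ feats x ∧ (feats x ∩ Lw 1).card < τ).card
        = ((chunk 1).filter fun x => u ∈ feats x ∧ (feats x ∩ Lw 1).card < τ).card := by
    intro u j hj
    rw [count_filter_eq Sc label feats nA (chunk j) hfeats (hcount j hj)
          (fun A => u ∈ A ∧ (A ∩ Lw 1).card < τ),
        count_filter_eq Sc label feats nA (chunk 1) hfeats (hcount 1 le_rfl)
          (fun A => u ∈ A ∧ (A ∩ Lw 1).card < τ)]
  have hstop1 : ∀ u ∈ S \ Lw 1,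
      (((chunk 1).filter fun x => u ∈ feats x ∧ (feats x ∩ Lw 1).card < τ).card : ℝ) < γ := by
    intro u hu
    have hL : learnedAfter (Lw 0) (usw 1) (usw 1).length = Lw 1 := by
      rw [learnedAfter, List.take_length, hLw1]
    have hst := run1.stopped u (by rw [hL]; exact hu)
    rw [hL] at hst
    have hact : active feats τ (Lw 1) (Mw 0) (cumT chunk 1)
        = (chunk 1).filter fun x => (feats x ∩ Lw 1).card < τ := by
      rw [active, hT1, hMw0, Finset.sdiff_empty]
    rw [gval, hact] at hst
    have hfc : featCount feats ((chunk 1).filter fun x => (feats x ∩ Lw 1).card < τ) u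
        = ((chunk 1).filter fun x => u ∈ feats x ∧ (feats x ∩ Lw 1).card < τ).card := by
      rw [featCount, Finset.filter_filter]
      congr 1
      ext x
      simp [and_comm]
    rw [hfc, hT1, hchunkcard 1 le_rfl] at hst
    have hnpos : (0:ℝ) < n := by exact_mod_cast hn1
    exact (div_lt_div_iff_of_pos_right hnpos).mp hst
  have key : ∀ j, 1 ≤ j → Lw j = Lw 1 ∧
      ∀ x ∈ cumT chunk j, (feats x ∩ Lw 1).card < τ → x ∈ Mw j := by
    intro j hj
    induction j, hj using Nat.le_induction with
    | base =>
      refine ⟨rfl, ?_⟩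
      intro x hx hτx
      have hM1 : Mw 1 = finalM feats τ (cumT chunk 1) (Mw 0) (Lw 0) (usw 1) := (hwarm 0).2.2
      rw [hM1, finalM]
      refine Finset.mem_union_right _ ?_
      rw [← hLw1, active, hMw0, Finset.sdiff_empty]
      exact Finset.mem_filter.mpr ⟨hx, hτx⟩
    | succ j hj ih =>
      obtain ⟨hLj, hMinv⟩ := ih
      have run := (hwarm j).1
      have hTpos : (0:ℝ) < ((cumT chunk (j+1)).card : ℝ) := by
        have h1 : 0 < (chunk (j+1)).card := by
          rw [hchunkcard (j+1) (by omega)]; omega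
        have h2 := Finset.card_le_card (hchsub (j+1) (j+1) (by omega) le_rfl)
        exact_mod_cast lt_of_lt_of_le h1 h2
      have hnil : usw (j+1) = [] := by
        by_contra hne
        have h0 : 0 < (usw (j+1)).length := List.length_pos_iff.mpr hne
        set u := (usw (j+1)).get ⟨0, h0⟩ with hu
        have hL0 : learnedAfter (Lw j) (usw (j+1)) 0 = Lw 1 := by
          simp [learnedAfter, hLj]
        have humem : u ∈ S \ Lw 1 := by
          have := run.mem 0 h0
          rwa [hL0] at this
        have hthr := run.threshold 0 h0
        rw [hL0, gval] at hthr
        have hγle : γ ≤ (featCount feats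
            (active feats τ (Lw 1) (Mw j) (cumT chunk (j+1))) u : ℝ) :=
          (div_le_div_iff_of_pos_right hTpos).mp hthr
        have hsub : (active feats τ (Lw 1) (Mw j) (cumT chunk (j+1))).filter
              (fun x => u ∈ feats x)
            ⊆ (chunk (j+1)).filter fun x => u ∈ feats x ∧ (feats x ∩ Lw 1).card < τ := by
          intro x hx
          simp only [active, Finset.mem_filter, Finset.mem_sdiff] at hx
          obtain ⟨⟨⟨hxT, hxM⟩, hxτ⟩, hxu⟩ := hx
          have hxch : x ∈ chunk (j+1) := by
            obtain ⟨l, hl, hxl⟩ := Finset.mem_biUnion.mp hxT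
            rw [Finset.mem_Icc] at hl
            by_cases hlj : l ≤ j
            · exact absurd (hMinv x (Finset.mem_biUnion.mpr
                ⟨l, Finset.mem_Icc.mpr ⟨hl.1, hlj⟩, hxl⟩) hxτ) hxM
            · have hlje : l = j+1 := by omega
              exact hlje ▸ hxl
          exact Finset.mem_filter.mpr ⟨hxch, hxu, hxτ⟩
        have hle : featCount feats (active feats τ (Lw 1) (Mw j) (cumT chunk (j+1))) u
            ≤ ((chunk (j+1)).filter fun x => u ∈ feats x ∧ (feats x ∩ Lw 1).card < τ).card := by
          rw [featCount]
          exact Finset.card_le_card hsub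
        have heq := hcnt u (j+1) (by omega)
        have hlt := hstop1 u humem
        have hle' : (featCount feats (active feats τ (Lw 1) (Mw j) (cumT chunk (j+1))) u : ℝ)
            ≤ (((chunk 1).filter fun x => u ∈ feats x ∧ (feats x ∩ Lw 1).card < τ).card : ℝ) := by
          exact_mod_cast heq ▸ hle
        linarith
      have hLsucc : Lw (j+1) = Lw 1 := by
        rw [(hwarm j).2.1, hnil]
        simp [hLj]
      refine ⟨hLsucc, ?_⟩
      intro x hx hτx
      rw [(hwarm j).2.2, finalM]
      by_cases hxM : x ∈ Mw j
      · exact Finset.mem_union_left _ hxM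
      · refine Finset.mem_union_right _ ?_
        rw [hnil]
        simp only [List.toFinset_nil, Finset.union_empty, active]
        exact Finset.mem_filter.mpr ⟨Finset.mem_sdiff.mpr ⟨hx, hxM⟩, hLj ▸ hτx⟩
  intro J hJ
  exact (key J (by omega)).1
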